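/- Let a, b, γ : [0,∞) → ℝ with b bounded, γ continuous with γ(z)^2 > 0 for z > 0, 1/γ^2 integrable at zero, and suppose there exists x̄ > 0 such that 2a(z)/γ(z)^2 ≥ 1 for all 0 < z < x̄. Define p_1(x) = ∫_1^x exp( −2 ∫_1^y (a(z) − b(z)z)/(γ(z)^2 z) dz ) dy for x > 0. Then lim_{x→0^+} p_1(x) = −∞. -/

import Mathlib

open MeasureTheory Set Filter

open intervalIntegral in
theorem aux_one_div_log {u v : ℝ} (h : (0:ℝ) ∉ Set.uIcc u v) :
    (∫ z in u..v, (1:ℝ)/z) = Real.log (v/u) := integral_one_div h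

/-- Feller test at the origin, square-root case `α = 1/2`: if `b` is bounded, `γ` is
continuous with `γ(z)² > 0` for `z > 0`, `1/γ²` is integrable at zero, and
`2a(z)/γ(z)² ≥ 1` for `z` near `0`, then the scale function
`p₁(x) = ∫_1^x exp(-2 ∫_1^y (a(z) - b(z)z)/(γ(z)² z) dz) dy` tends to `-∞`
as `x → 0⁺`. -/
theorem stmt_12 (a b γ : ℝ → ℝ)
    (hac : ContinuousOn a (Set.Ici 0))
    (hbc : ContinuousOn b (Set.Ici 0))
    (hbdd : ∃ Cb : ℝ, ∀ x ≥ (0:ℝ), |b x| ≤ Cb)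
    (hγc : ContinuousOn γ (Set.Ici 0))
    (hγpos : ∀ z > (0:ℝ), 0 < γ z ^ 2)
    (hint : IntegrableOn (fun z => 1 / γ z ^ 2) (Set.Ioo 0 1))
    (hfeller : ∃ xbar > (0:ℝ), ∀ z, 0 < z → z < xbar → 1 ≤ 2 * a z / γ z ^ 2)
    (p1 : ℝ → ℝ)
    (hp1 : ∀ x > (0:ℝ), p1 x =
      ∫ y in (1:ℝ)..x,
        Real.exp (-2 * ∫ z in (1:ℝ)..y, (a z - b z * z) / (γ z ^ 2 * z))) :
    Tendsto p1 (nhdsWithin 0 (Set.Ioi 0)) atBot := by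
  classical
  obtain ⟨Cb, hCb⟩ := hbdd
  obtain ⟨xbar, hxbar0, hfel⟩ := hfeller
  have hCb0 : 0 ≤ Cb := le_trans (abs_nonneg _) (hCb 0 le_rfl)
  set c : ℝ := min xbar 1 / 2 with hcdef
  have hmin0 : 0 < min xbar 1 := lt_min hxbar0 one_pos
  have hc0 : 0 < c := by positivity
  have hc1 : c < 1 := by
    have h1 : min xbar 1 ≤ 1 := min_le_right _ _
    rw [hcdef]; linarith
  have hcx : c < xbar := by
    have h1 : min xbar 1 ≤ xbar := min_le_left _ _
    rw [hcdef]; linarith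
  set f : ℝ → ℝ := fun z => (a z - b z * z) / (γ z ^ 2 * z) with hfdef
  -- continuity facts on `Ioi 0`
  have hfc : ContinuousOn f (Ioi 0) := by
    intro z hz
    have hz' : (0:ℝ) < z := hz
    have hne : γ z ^ 2 * z ≠ 0 := ne_of_gt (mul_pos (hγpos z hz') hz')
    exact (((hac.continuousAt (Ici_mem_nhds hz')).sub
      ((hbc.continuousAt (Ici_mem_nhds hz')).mul continuousAt_id)).div
      (((hγc.continuousAt (Ici_mem_nhds hz')).pow 2).mul continuousAt_id)
      hne).continuousWithinAt
  have hγ2c : ContinuousOn (fun z => 1 / γ z ^ 2) (Ioi 0) := by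
    intro z hz
    have hz' : (0:ℝ) < z := hz
    exact (continuousAt_const.div
      ((hγc.continuousAt (Ici_mem_nhds hz')).pow 2)
      (ne_of_gt (hγpos z hz'))).continuousWithinAt
  have hzc : ContinuousOn (fun z : ℝ => (1:ℝ) / z) (Ioi 0) := by
    intro z hz
    have hz' : (0:ℝ) < z := hz
    exact (continuousAt_const.div continuousAt_id
      (show id z ≠ 0 from ne_of_gt hz')).continuousWithinAt
  have huIcc : ∀ u v : ℝ, 0 < u → 0 < v → Set.uIcc u v ⊆ Ioi (0:ℝ) := by
    intro u v hu hv z hz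
    rw [Set.uIcc_eq_union] at hz
    rcases hz with h | h
    · exact lt_of_lt_of_le hu h.1
    · exact lt_of_lt_of_le hv h.1
  have hfi : ∀ u v : ℝ, 0 < u → 0 < v → IntervalIntegrable f volume u v :=
    fun u v hu hv => (hfc.mono (huIcc u v hu hv)).intervalIntegrable
  have hγ2i : ∀ u v : ℝ, 0 < u → 0 < v →
      IntervalIntegrable (fun z => 1 / γ z ^ 2) volume u v :=
    fun u v hu hv => (hγ2c.mono (huIcc u v hu hv)).intervalIntegrable
  have hzi : ∀ u v : ℝ, 0 < u → 0 < v →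
      IntervalIntegrable (fun z : ℝ => (1:ℝ) / z) volume u v :=
    fun u v hu hv => (hzc.mono (huIcc u v hu hv)).intervalIntegrable
  set M : ℝ := ∫ z in Ioo (0:ℝ) 1, 1 / γ z ^ 2 with hMdef
  have hnn : ∀ z ∈ Ioo (0:ℝ) 1, 0 ≤ 1 / γ z ^ 2 :=
    fun z hz => le_of_lt (div_pos one_pos (hγpos z hz.1))
  have hM0 : 0 ≤ M := setIntegral_nonneg measurableSet_Ioo hnn
  -- bound for the integral of 1/γ² on subintervals
  have hMbd : ∀ y : ℝ, 0 < y → y ≤ c → (∫ z in y..c, 1 / γ z ^ 2) ≤ M := by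
    intro y hy hyc
    rw [intervalIntegral.integral_of_le hyc, hMdef]
    refine setIntegral_mono_set hint
      (ae_restrict_of_forall_mem measurableSet_Ioo hnn) ?_
    refine HasSubset.Subset.eventuallyLE ?_
    intro z hz
    exact ⟨lt_trans hy hz.1, lt_of_le_of_lt hz.2 hc1⟩
  set K : ℝ := ∫ z in c..(1:ℝ), f z with hKdef
  set D : ℝ := c * Real.exp (2 * (K - Cb * M)) with hDdef
  have hD0 : 0 < D := mul_pos hc0 (Real.exp_pos _)
  -- key lower bound for the exponential integrand
  have key : ∀ y : ℝ, 0 < y → y ≤ c →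
      D / y ≤ Real.exp (-2 * ∫ z in (1:ℝ)..y, f z) := by
    intro y hy hyc
    have hsym : (∫ z in (1:ℝ)..y, f z) = -∫ z in y..(1:ℝ), f z :=
      intervalIntegral.integral_symm y 1
    have hsplit : (∫ z in y..(1:ℝ), f z) = (∫ z in y..c, f z) + K :=
      (intervalIntegral.integral_add_adjacent_intervals
        (hfi y c hy hc0) (hfi c 1 hc0 one_pos)).symm
    -- pointwise lower bound on [y, c]
    have hgi : IntervalIntegrable
        (fun z : ℝ => (1/2) * (1/z) - Cb * (1 / γ z ^ 2)) volume y c :=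
      ((hzi y c hy hc0).const_mul _).sub ((hγ2i y c hy hc0).const_mul _)
    have hmono : (∫ z in y..c, (1/2) * (1/z) - Cb * (1 / γ z ^ 2))
        ≤ ∫ z in y..c, f z := by
      refine intervalIntegral.integral_mono_on hyc hgi (hfi y c hy hc0) ?_
      intro z hz
      have hz0 : 0 < z := lt_of_lt_of_le hy hz.1
      have hzx : z < xbar := lt_of_le_of_lt hz.2 hcx
      have hγ2 : 0 < γ z ^ 2 := hγpos z hz0
      have hfz : f z = a z / (γ z ^ 2 * z) - b z / γ z ^ 2 := by
        rw [hfdef]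
        field_simp
      have hfel' : 1 ≤ 2 * a z / γ z ^ 2 := hfel z hz0 hzx
      have h2a : γ z ^ 2 ≤ 2 * a z := by
        have := (le_div_iff₀ hγ2).mp hfel'
        linarith
      have hb : b z ≤ Cb := le_trans (le_abs_self _) (hCb z hz0.le)
      have h1 : (1/2) * (1/z) ≤ a z / (γ z ^ 2 * z) := by
        have heq : (1/2) * (1/z) = 1 / (2 * z) := by
          field_simp
        rw [heq, div_le_div_iff₀ (by positivity) (by positivity)]
        nlinarith
      have h2 : b z / γ z ^ 2 ≤ Cb / γ z ^ 2 := by gcongr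
      rw [hfz]
      have h3 : Cb * (1 / γ z ^ 2) = Cb / γ z ^ 2 := mul_one_div _ _
      linarith
    have hone : (∫ z in y..c, (1:ℝ)/z) = Real.log (c / y) :=
      aux_one_div_log (Set.notMem_uIcc_of_lt hy hc0)
    have hgval : (∫ z in y..c, (1/2) * (1/z) - Cb * (1 / γ z ^ 2))
        = (1/2) * Real.log (c / y) - Cb * ∫ z in y..c, 1 / γ z ^ 2 := by
      rw [intervalIntegral.integral_sub ((hzi y c hy hc0).const_mul _)
        ((hγ2i y c hy hc0).const_mul _),
        intervalIntegral.integral_const_mul, intervalIntegral.integral_const_mul,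
        hone]
    have hMb := hMbd y hy hyc
    have hMb' : Cb * (∫ z in y..c, 1 / γ z ^ 2) ≤ Cb * M :=
      mul_le_mul_of_nonneg_left hMb hCb0
    have hF : Real.log (c / y) + 2 * (K - Cb * M) ≤ 2 * ∫ z in y..(1:ℝ), f z := by
      rw [hsplit]
      nlinarith [hmono, hgval]
    calc D / y = (c / y) * Real.exp (2 * (K - Cb * M)) := by
          rw [hDdef, mul_div_right_comm]
      _ = Real.exp (Real.log (c / y) + 2 * (K - Cb * M)) := by
          rw [Real.exp_add, Real.exp_log (div_pos hc0 hy)]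
      _ ≤ Real.exp (-2 * ∫ z in (1:ℝ)..y, f z) := by
          apply Real.exp_le_exp.mpr
          rw [hsym]
          linarith
  -- the integrand of the scale function
  set E : ℝ → ℝ := fun y => Real.exp (-2 * ∫ z in (1:ℝ)..y, f z) with hEdef
  have hEcont : ∀ x : ℝ, 0 < x → x ≤ 1 → ContinuousOn E (Set.uIcc x 1) := by
    intro x hx hx1
    have h1 : ContinuousOn (fun y => ∫ z in (1:ℝ)..y, f z) (Set.uIcc x 1) :=
      intervalIntegral.continuousOn_primitive_interval'
        (hfi x 1 hx one_pos) Set.right_mem_uIcc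
    exact Real.continuous_exp.comp_continuousOn (continuousOn_const.mul h1)
  -- eventual bound for p1
  have hbound : ∀ x : ℝ, 0 < x → x < c → p1 x ≤ -(D * Real.log (c / x)) := by
    intro x hx hxc
    have hx1 : x ≤ 1 := le_of_lt (lt_trans hxc hc1)
    have hcmem : c ∈ Set.uIcc x (1:ℝ) := by
      rw [Set.uIcc_of_le hx1]
      exact ⟨hxc.le, hc1.le⟩
    have hxmem : x ∈ Set.uIcc x (1:ℝ) := Set.left_mem_uIcc
    have h1mem : (1:ℝ) ∈ Set.uIcc x (1:ℝ) := Set.right_mem_uIcc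
    have hEc := hEcont x hx hx1
    have hExc : IntervalIntegrable E volume x c :=
      (hEc.mono (Set.uIcc_subset_uIcc hxmem hcmem)).intervalIntegrable
    have hEc1 : IntervalIntegrable E volume c 1 :=
      (hEc.mono (Set.uIcc_subset_uIcc hcmem h1mem)).intervalIntegrable
    have hsym : (∫ y in (1:ℝ)..x, E y) = -∫ y in x..(1:ℝ), E y :=
      intervalIntegral.integral_symm x 1
    have hsplit : (∫ y in x..(1:ℝ), E y)
        = (∫ y in x..c, E y) + ∫ y in c..(1:ℝ), E y :=
      (intervalIntegral.integral_add_adjacent_intervals hExc hEc1).symm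
    have h2 : 0 ≤ ∫ y in c..(1:ℝ), E y :=
      intervalIntegral.integral_nonneg hc1.le (fun y _ => (Real.exp_pos _).le)
    have hDi : IntervalIntegrable (fun y : ℝ => D / y) volume x c := by
      have := (hzi x c hx hc0).const_mul D
      simpa [mul_one_div, div_eq_mul_inv] using this
    have h3 : (∫ y in x..c, (fun y : ℝ => D / y) y) ≤ ∫ y in x..c, E y := by
      refine intervalIntegral.integral_mono_on hxc.le hDi hExc ?_
      intro y hy
      exact key y (lt_of_lt_of_le hx hy.1) hy.2
    have h4 : (∫ y in x..c, D / y) = D * Real.log (c / x) := by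
      have e1 : (∫ y in x..c, D / y) = ∫ y in x..c, D * (1/y) := by
        simp only [mul_one_div]
      rw [e1, intervalIntegral.integral_const_mul,
        aux_one_div_log (Set.notMem_uIcc_of_lt hx hc0)]
    rw [hp1 x hx]
    have hgoal : (∫ y in (1:ℝ)..x, E y) ≤ -(D * Real.log (c / x)) := by
      rw [hsym, hsplit]
      rw [h4] at h3
      · linarith
    exact hgoal
  -- limit of the bounding function
  have hlim : Tendsto (fun x : ℝ => -(D * Real.log (c / x)))
      (nhdsWithin 0 (Set.Ioi 0)) atBot := by
    have h1 : Tendsto (fun x : ℝ => Real.log (c / x))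
        (nhdsWithin 0 (Set.Ioi 0)) atTop := by
      have h2 : Tendsto (fun x : ℝ => Real.log c + -Real.log x)
          (nhdsWithin 0 (Set.Ioi 0)) atTop :=
        tendsto_atTop_add_const_left _ _
          (tendsto_neg_atBot_atTop.comp Real.tendsto_log_nhdsGT_zero)
      refine h2.congr' ?_
      filter_upwards [self_mem_nhdsWithin] with x hx
      rw [Real.log_div (ne_of_gt hc0) (ne_of_gt hx)]
      ring
    have h3 : Tendsto (fun x : ℝ => D * Real.log (c / x))
        (nhdsWithin 0 (Set.Ioi 0)) atTop := h1.const_mul_atTop hD0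
    exact (tendsto_neg_atTop_atBot).comp h3
  refine tendsto_atBot_mono' _ ?_ hlim
  filter_upwards [Ioo_mem_nhdsGT_of_mem (⟨le_refl (0:ℝ), hc0⟩ : (0:ℝ) ∈ Set.Ico 0 c)]
    with x hx
  exact hbound x hx.1 hx.2
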